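/- Given two quantum states (density matrices) ρ and σ, the maximum probability of correctly identifying which state one received (each prepared with prior probability 1/2, one measurement allowed) equals 1/2 + (1/4)‖ρ - σ‖₁ (Helstrom bound). -/

import Mathlib

open scoped ComplexOrder

section helpers
variable {n : Type*} [Fintype n] [DecidableEq n]

lemma trace_re_nonneg' (M : Matrix n n ℂ) (hM : M.PosSemidef) : 0 ≤ M.trace.re := by
  have h : ∀ i, 0 ≤ (M i i).re := fun i => by
    have := hM.re_dotProduct_nonneg (Pi.single i 1)
    simpa [dotProduct, Matrix.mulVec, Pi.single_apply, apply_ite] using this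
  rw [Matrix.trace, Complex.re_sum]
  exact Finset.sum_nonneg fun i _ => h i

open scoped MatrixOrder in
lemma trace_mul_re_nonneg' {M N : Matrix n n ℂ}
    (hM : M.PosSemidef) (hN : N.PosSemidef) : 0 ≤ ((M * N).trace).re := by
  have h1 : M * N = M * CFC.sqrt N * CFC.sqrt N := by
    rw [mul_assoc, CFC.sqrt_mul_sqrt_self N (Matrix.nonneg_iff_posSemidef.mpr hN)]
  have h2 : (M * CFC.sqrt N * CFC.sqrt N).trace = (CFC.sqrt N * M * CFC.sqrt N).trace := by
    rw [Matrix.trace_mul_cycle]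
  have h3 : (CFC.sqrt N * M * CFC.sqrt N).PosSemidef := by
    have := hM.mul_mul_conjTranspose_same (CFC.sqrt N)
    rwa [(Matrix.nonneg_iff_posSemidef.mp (CFC.sqrt_nonneg N)).isHermitian.eq] at this
  rw [h1, h2]
  exact trace_re_nonneg' _ h3

noncomputable def conjD {A : Matrix n n ℂ} (hA : A.IsHermitian) (f : ℝ → ℝ) : Matrix n n ℂ :=
  (hA.eigenvectorUnitary : Matrix n n ℂ) *
    Matrix.diagonal (Complex.ofReal ∘ f ∘ hA.eigenvalues) *
    star (hA.eigenvectorUnitary : Matrix n n ℂ)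

lemma conjD_mul {A : Matrix n n ℂ} (hA : A.IsHermitian) (f g : ℝ → ℝ) :
    conjD hA f * conjD hA g = conjD hA (f * g) := by
  unfold conjD
  have hU : star (hA.eigenvectorUnitary : Matrix n n ℂ) * (hA.eigenvectorUnitary : Matrix n n ℂ) = 1 :=
    Matrix.mem_unitaryGroup_iff'.mp (hA.eigenvectorUnitary).2
  calc (hA.eigenvectorUnitary : Matrix n n ℂ) * Matrix.diagonal (Complex.ofReal ∘ f ∘ hA.eigenvalues) *
      star (hA.eigenvectorUnitary : Matrix n n ℂ) *
      ((hA.eigenvectorUnitary : Matrix n n ℂ) * Matrix.diagonal (Complex.ofReal ∘ g ∘ hA.eigenvalues) *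
      star (hA.eigenvectorUnitary : Matrix n n ℂ))
      = (hA.eigenvectorUnitary : Matrix n n ℂ) * (Matrix.diagonal (Complex.ofReal ∘ f ∘ hA.eigenvalues) *
        (star (hA.eigenvectorUnitary : Matrix n n ℂ) * (hA.eigenvectorUnitary : Matrix n n ℂ)) *
        Matrix.diagonal (Complex.ofReal ∘ g ∘ hA.eigenvalues)) *
        star (hA.eigenvectorUnitary : Matrix n n ℂ) := by simp only [mul_assoc]
    _ = _ := by
        rw [hU, mul_one, Matrix.diagonal_mul_diagonal]
        congr 2
        funext i j
        by_cases h : i = j <;> simp [Matrix.diagonal_apply, h]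

lemma conjD_add {A : Matrix n n ℂ} (hA : A.IsHermitian) (f g : ℝ → ℝ) :
    conjD hA f + conjD hA g = conjD hA (f + g) := by
  unfold conjD
  rw [← Matrix.add_mul, ← Matrix.mul_add, Matrix.diagonal_add]
  congr 2
  funext i j
  by_cases h : i = j <;> simp [Matrix.diagonal_apply, h]

lemma conjD_trace {A : Matrix n n ℂ} (hA : A.IsHermitian) (f : ℝ → ℝ) :
    (conjD hA f).trace = ((∑ i, f (hA.eigenvalues i) : ℝ) : ℂ) := by
  unfold conjD
  rw [Matrix.trace_mul_cycle,
    Matrix.mem_unitaryGroup_iff'.mp (hA.eigenvectorUnitary).2, one_mul,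
    Matrix.trace_diagonal]
  push_cast
  rfl

lemma conjD_psd {A : Matrix n n ℂ} (hA : A.IsHermitian) (f : ℝ → ℝ)
    (hf : ∀ i, 0 ≤ f (hA.eigenvalues i)) : (conjD hA f).PosSemidef := by
  unfold conjD
  have : (Matrix.diagonal (Complex.ofReal ∘ f ∘ hA.eigenvalues)).PosSemidef := by
    refine Matrix.PosSemidef.diagonal fun i => ?_
    simpa using Complex.zero_le_real.mpr (hf i)
  simpa [Matrix.star_eq_conjTranspose] using
    this.mul_mul_conjTranspose_same (hA.eigenvectorUnitary : Matrix n n ℂ)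

lemma conjD_one {A : Matrix n n ℂ} (hA : A.IsHermitian) : conjD hA 1 = 1 := by
  unfold conjD
  have : Matrix.diagonal (Complex.ofReal ∘ (1 : ℝ → ℝ) ∘ hA.eigenvalues) = 1 := by
    ext i j
    by_cases h : i = j <;> simp [Matrix.diagonal, Matrix.one_apply, h]
  rw [this, mul_one, Matrix.mem_unitaryGroup_iff.mp (hA.eigenvectorUnitary).2]

lemma conjD_id {A : Matrix n n ℂ} (hA : A.IsHermitian) : conjD hA id = A := by
  unfold conjD
  exact hA.spectral_theorem.symm

open scoped MatrixOrder in
lemma conjD_eq_sqrt_aux {A : Matrix n n ℂ} (hA : A.IsHermitian) (f : ℝ → ℝ) (B : Matrix n n ℂ)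
    (hB : B.PosSemidef) (hS : (conjD hA f).PosSemidef) (hsq : conjD hA f ^ 2 = B) :
    conjD hA f = conjD hB.1 Real.sqrt := by
  calc conjD hA f = CFC.sqrt B :=
        (CFC.sqrt_unique (by rw [← pow_two]; exact hsq) (Matrix.nonneg_iff_posSemidef.mpr hS)).symm
    _ = cfc Real.sqrt B := by
      rw [CFC.sqrt_eq_real_sqrt B (Matrix.nonneg_iff_posSemidef.mpr hB), cfcₙ_eq_cfc]
    _ = hB.1.cfc Real.sqrt := hB.1.cfc_eq _
    _ = conjD hB.1 Real.sqrt := by rw [Matrix.IsHermitian.cfc, Unitary.conjStarAlgAut_apply]; rfl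

end helpers

/-- The trace norm ‖A‖₁ = tr √(A†A). -/
noncomputable def traceNorm {n : Type*} [Fintype n] [DecidableEq n]
    (A : Matrix n n ℂ) : ℝ :=
  (((Matrix.posSemidef_conjTranspose_mul_self A).1.eigenvectorUnitary : Matrix n n ℂ) *
      Matrix.diagonal (((↑) : ℝ → ℂ) ∘ Real.sqrt ∘ (Matrix.posSemidef_conjTranspose_mul_self A).1.eigenvalues) *
      (star (Matrix.posSemidef_conjTranspose_mul_self A).1.eigenvectorUnitary : Matrix n n ℂ)).trace.re

/-- Helstrom bound: for density matrices ρ, σ, the maximum success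
probability of distinguishing them (priors 1/2, one POVM measurement 0 ≤ M ≤ 1)
equals 1/2 + (1/4)‖ρ - σ‖₁, and it is attained. -/
theorem helstrom_bound
    {n : Type*} [Fintype n] [DecidableEq n]
    (ρ σ : Matrix n n ℂ) (hρ : ρ.PosSemidef) (hσ : σ.PosSemidef)
    (hρtr : ρ.trace = 1) (hσtr : σ.trace = 1) :
    IsGreatest
      {p : ℝ | ∃ M : Matrix n n ℂ, M.PosSemidef ∧ (1 - M).PosSemidef ∧
        p = (1/2) * ((M * ρ).trace).re + (1/2) * (((1 - M) * σ).trace).re}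
      (1/2 + (1/4) * traceNorm (ρ - σ)) := by
  have hA : (ρ - σ).IsHermitian := hρ.1.sub hσ.1
  set fp : ℝ → ℝ := fun x => max x 0 with hfp
  set fm : ℝ → ℝ := fun x => max (-x) 0 with hfm
  -- pointwise facts
  have hfp_nonneg : ∀ x, 0 ≤ fp x := fun x => le_max_right _ _
  have hfm_nonneg : ∀ x, 0 ≤ fm x := fun x => le_max_right _ _
  have hsplit : ∀ x : ℝ, fm x + x = fp x := by
    intro x
    rcases le_total 0 x with h | h
    · rw [hfp, hfm]; simp only
      rw [max_eq_right (neg_nonpos.mpr h), max_eq_left h]; ring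
    · rw [hfp, hfm]; simp only
      rw [max_eq_left (neg_nonneg.mpr h), max_eq_right h]; ring
  -- matrices
  have hPpsd : (conjD hA fp).PosSemidef := conjD_psd hA fp fun i => hfp_nonneg _
  have hNpsd : (conjD hA fm).PosSemidef := conjD_psd hA fm fun i => hfm_nonneg _
  have hPN : conjD hA fm + (ρ - σ) = conjD hA fp := by
    have h := conjD_add hA fm id
    rw [conjD_id] at h
    rw [h]
    exact congrArg (conjD hA) (funext fun x => hsplit x)
  -- the square root of (ρ-σ)ᴴ(ρ-σ)
  have hSpsd : (conjD hA (fp + fm)).PosSemidef :=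
    conjD_psd hA _ fun i => add_nonneg (hfp_nonneg _) (hfm_nonneg _)
  have hsq : conjD hA (fp + fm) ^ 2 = (ρ - σ).conjTranspose * (ρ - σ) := by
    have h := conjD_mul hA id id
    rw [conjD_id] at h
    rw [pow_two, conjD_mul, hA.eq, h]
    refine congrArg (conjD hA) (funext fun x => ?_)
    show (fp x + fm x) * (fp x + fm x) = x * x
    have : fp x + fm x = |x| := by
      rcases le_total 0 x with h | h
      · rw [hfp, hfm]; simp only
        rw [max_eq_left h, max_eq_right (neg_nonpos.mpr h), abs_of_nonneg h]; ring
      · rw [hfp, hfm]; simp only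
        rw [max_eq_right h, max_eq_left (neg_nonneg.mpr h), abs_of_nonpos h]; ring
    rw [this, abs_mul_abs_self]
  have hsqrt : conjD hA (fp + fm) =
      ((Matrix.posSemidef_conjTranspose_mul_self (ρ - σ)).1.eigenvectorUnitary : Matrix n n ℂ) *
      Matrix.diagonal (((↑) : ℝ → ℂ) ∘ Real.sqrt ∘ (Matrix.posSemidef_conjTranspose_mul_self (ρ - σ)).1.eigenvalues) *
      (star (Matrix.posSemidef_conjTranspose_mul_self (ρ - σ)).1.eigenvectorUnitary : Matrix n n ℂ) :=
    conjD_eq_sqrt_aux hA _ _ (Matrix.posSemidef_conjTranspose_mul_self (ρ - σ)) hSpsd hsq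
  have htn : traceNorm (ρ - σ) = ∑ i, (fp + fm) (hA.eigenvalues i) := by
    rw [traceNorm, ← hsqrt, conjD_trace, Complex.ofReal_re]
  -- eigenvalue sum is zero
  have htrA : ∑ i, hA.eigenvalues i = 0 := by
    have h0 : (ρ - σ).trace = 0 := by rw [Matrix.trace_sub, hρtr, hσtr, sub_self]
    have h1 : ((∑ i, hA.eigenvalues i : ℝ) : ℂ) = 0 := by
      have h2 := conjD_trace hA id
      rw [conjD_id hA, h0] at h2
      simpa using h2.symm
    exact_mod_cast h1
  have hhalf : ∑ i, fp (hA.eigenvalues i) = (1/2) * traceNorm (ρ - σ) := by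
    have h1 : ∑ i, fp (hA.eigenvalues i) - ∑ i, fm (hA.eigenvalues i)
        = ∑ i, hA.eigenvalues i := by
      rw [← Finset.sum_sub_distrib]
      exact Finset.sum_congr rfl fun i _ => by
        have := hsplit (hA.eigenvalues i); linarith
    have h2 : ∑ i, fp (hA.eigenvalues i) + ∑ i, fm (hA.eigenvalues i)
        = traceNorm (ρ - σ) := by
      rw [htn, ← Finset.sum_add_distrib]
      exact Finset.sum_congr rfl fun i _ => rfl
    rw [htrA] at h1
    linarith
  -- trace of positive part
  have hPtr : ((conjD hA fp).trace).re = (1/2) * traceNorm (ρ - σ) := by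
    rw [conjD_trace, Complex.ofReal_re, hhalf]
  -- value rewriting
  have hval : ∀ M : Matrix n n ℂ,
      (1/2) * ((M * ρ).trace).re + (1/2) * (((1 - M) * σ).trace).re
        = 1/2 + (1/2) * ((M * (ρ - σ)).trace).re := by
    intro M
    have h1 : (1 - M) * σ = σ - M * σ := by rw [Matrix.sub_mul, one_mul]
    have h2 : M * (ρ - σ) = M * ρ - M * σ := Matrix.mul_sub M ρ σ
    rw [h1, h2, Matrix.trace_sub, Matrix.trace_sub, hσtr]
    simp only [Complex.sub_re, Complex.one_re]
    ring
  -- the key upper bound on tr(M(ρ-σ))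
  have key : ∀ M : Matrix n n ℂ, M.PosSemidef → (1 - M).PosSemidef →
      ((M * (ρ - σ)).trace).re ≤ (1/2) * traceNorm (ρ - σ) := by
    intro M hM h1M
    have hAeq : ρ - σ = conjD hA fp - conjD hA fm := by
      rw [← hPN]; abel
    have h2 : M * (ρ - σ) = M * conjD hA fp - M * conjD hA fm := by
      rw [← Matrix.mul_sub, ← hAeq]
    have h3 : 0 ≤ ((M * conjD hA fm).trace).re := trace_mul_re_nonneg' hM hNpsd
    have h4 : 0 ≤ (((1 - M) * conjD hA fp).trace).re := trace_mul_re_nonneg' h1M hPpsd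
    have h5 : (1 - M) * conjD hA fp = conjD hA fp - M * conjD hA fp := by
      rw [Matrix.sub_mul, one_mul]
    rw [h5, Matrix.trace_sub] at h4
    simp only [Complex.sub_re] at h4
    rw [h2, Matrix.trace_sub]
    simp only [Complex.sub_re]
    have := hPtr
    linarith
  constructor
  · -- attained by the spectral projector onto the positive eigenspace
    set g : ℝ → ℝ := fun x => if 0 < x then 1 else 0 with hg
    have hgpsd : (conjD hA g).PosSemidef := by
      refine conjD_psd hA g fun i => ?_
      rw [hg]; dsimp only; split <;> norm_num
    have hone : conjD hA g + conjD hA (fun x => 1 - g x) = 1 := by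
      rw [conjD_add, show (g + fun x => 1 - g x) = (1 : ℝ → ℝ) by funext x; simp,
        conjD_one]
    have h1g : (1 - conjD hA g).PosSemidef := by
      have : 1 - conjD hA g = conjD hA (fun x => 1 - g x) := by
        rw [← hone]; abel
      rw [this]
      refine conjD_psd hA _ fun i => ?_
      rw [hg]; dsimp only; split <;> norm_num
    refine ⟨conjD hA g, hgpsd, h1g, ?_⟩
    rw [hval]
    have hMA : conjD hA g * (ρ - σ) = conjD hA fp := by
      have h := conjD_mul hA g id
      rw [conjD_id] at h
      rw [h]
      refine congrArg (conjD hA) (funext fun x => ?_)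
      show g x * x = fp x
      rw [hg, hfp]; dsimp only
      split
      · rw [max_eq_left (le_of_lt ‹0 < x›)]; ring
      · rw [max_eq_right (le_of_not_gt ‹¬ 0 < x›)]; ring
    rw [hMA, hPtr]
    ring
  · rintro p ⟨M, hM, h1M, rfl⟩
    rw [hval M]
    have := key M hM h1M
    linarith
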